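/- Let G be a spider graph with p ≥ 1 legs (paths) attached to the center, and let N_e denote the number of vertices of G at even positive level (distance from the center). Then the differential chromatic number of G is at most N_e + 1. -/

import Mathlib

/-- A labeling of the vertices of a finite graph on `n` vertices: a one-to-one
assignment of the numbers `1, …, n` to the vertices. -/
def IsLabeling {V : Type*} [Fintype V] (c : V → ℕ) : Prop :=
  Function.Injective c ∧ ∀ v, c v ∈ Finset.Icc 1 (Fintype.card V)

/-- The differential value of the labeling `c` is at least `d`: every edge has
label difference at least `d`. -/
def DiffValAtLeast {V : Type*} (G : SimpleGraph V) (c : V → ℕ) (d : ℕ) : Prop :=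
  ∀ u v, G.Adj u v → d ≤ Nat.dist (c u) (c v)

/-- The differential chromatic number: the maximum, over all labelings, of the
minimum label difference over the edges. -/
noncomputable def diffChromNum {V : Type*} [Fintype V] (G : SimpleGraph V) : ℕ :=
  sSup {d : ℕ | ∃ c : V → ℕ, IsLabeling c ∧ DiffValAtLeast G c d}

/-- The spider graph with center `none` and `p` attached paths, the `i`-th path
having `ℓ i` vertices `some ⟨i, j⟩` (the vertex `some ⟨i, j⟩` is at level `j + 1`,
i.e. at distance `j + 1` from the center). -/
def spider (p : ℕ) (ℓ : Fin p → ℕ) : SimpleGraph (Option (Σ i : Fin p, Fin (ℓ i))) :=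
  SimpleGraph.fromRel (fun a b =>
    (a = none ∧ ∃ (i : Fin p) (h : 0 < ℓ i), b = some ⟨i, ⟨0, h⟩⟩) ∨
    (∃ (i : Fin p) (x y : Fin (ℓ i)), (x : ℕ) + 1 = (y : ℕ) ∧
      a = some ⟨i, x⟩ ∧ b = some ⟨i, y⟩))

/-- The number of vertices of the spider at even positive level (the vertex
`some ⟨i, j⟩` is at level `j + 1`). -/
def spiderNe (p : ℕ) (ℓ : Fin p → ℕ) : ℕ :=
  (Finset.univ.filter (fun v : Σ i : Fin p, Fin (ℓ i) => (v.2 : ℕ) % 2 = 1)).card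

/-- The number of vertices of the spider at odd level. -/
def spiderNo (p : ℕ) (ℓ : Fin p → ℕ) : ℕ :=
  (Finset.univ.filter (fun v : Σ i : Fin p, Fin (ℓ i) => (v.2 : ℕ) % 2 = 0)).card

/-- A spider graph with `p ≥ 1` paths attached to the center and `N_e` vertices at
even positive level has differential chromatic number at most `N_e + 1`. -/

private def phiC (u v w : ℕ) : ℕ := w - (if u < w then 1 else 0) - (if v < w then 1 else 0)

private lemma phi_mem {u v w N : ℕ} (hu1 : 1 ≤ u) (huN : u ≤ N) (hv1 : 1 ≤ v) (hvN : v ≤ N)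
    (hw1 : 1 ≤ w) (hwN : w ≤ N) (huv : u ≠ v) (hwu : w ≠ u) (hwv : w ≠ v) :
    1 ≤ phiC u v w ∧ phiC u v w ≤ N - 2 := by
  unfold phiC; split_ifs <;> omega

private lemma phi_gap {u v a b d : ℕ} (huv : d ≤ Nat.dist u v) (hab : d ≤ Nat.dist a b)
    (hau : a ≠ u) (hav : a ≠ v) (hbu : b ≠ u) (hbv : b ≠ v) :
    d - 1 ≤ Nat.dist (phiC u v a) (phiC u v b) := by
  simp only [Nat.dist, phiC] at *; split_ifs <;> omega

private lemma phi_inj {u v a b : ℕ} (huv : u ≠ v) (hab : a ≠ b) (hau : a ≠ u) (hav : a ≠ v)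
    (hbu : b ≠ u) (hbv : b ≠ v) : phiC u v a ≠ phiC u v b := by
  simp only [phiC]; split_ifs <;> omega

private lemma chain_prefix {R : ℕ → ℕ → Prop} : ∀ (l₁ : List ℕ) (x : ℕ) (l₂ : List ℕ),
    List.Chain R x (l₁ ++ l₂) → List.Chain R x l₁
  | [], _, _, _ => List.Chain.nil
  | a :: t, x, l₂, h => by
      rw [List.cons_append] at h; unfold List.Chain at h; rw [List.chain_cons] at h
      exact List.chain_cons.2 ⟨h.1, chain_prefix t a l₂ h.2⟩

private lemma chain_last_pair {R : ℕ → ℕ → Prop} : ∀ (l₁ : List ℕ) (x u v : ℕ),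
    List.Chain R x (l₁ ++ [u, v]) → R u v
  | [], x, u, v, h => by
      rw [List.nil_append] at h; unfold List.Chain at h; rw [List.chain_cons, List.chain_cons] at h; exact h.2.1
  | a :: t, x, u, v, h => by
      rw [List.cons_append] at h; unfold List.Chain at h; rw [List.chain_cons] at h
      exact chain_last_pair t a u v h.2

private lemma chain_phi {u v d : ℕ} (huv : d ≤ Nat.dist u v) :
    ∀ (m : List ℕ) (x : ℕ), x ≠ u → x ≠ v → (∀ w ∈ m, w ≠ u ∧ w ≠ v) →
    List.Chain (fun a b => d ≤ Nat.dist a b) x m →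
    List.Chain (fun a b => d - 1 ≤ Nat.dist a b) (phiC u v x) (m.map (phiC u v)) := by
  intro m
  induction m with
  | nil => intros; exact List.Chain.nil
  | cons y t ih =>
    intro x hxu hxv hm hc
    unfold List.Chain at hc ⊢; rw [List.chain_cons] at hc
    rw [List.map_cons, List.chain_cons]
    have hy := hm y (by simp)
    exact ⟨phi_gap huv hc.1 hxu hxv hy.1 hy.2,
      ih y hy.1 hy.2 (fun w hw => hm w (by simp [hw])) hc.2⟩

private lemma window_lemma {d N x : ℕ} (hd : 1 ≤ d) (hx1 : 1 ≤ x) (hxN : x ≤ N)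
    (ys : List ℕ) (hne : ys ≠ []) (hnd : ys.Nodup)
    (hys : ∀ y ∈ ys, (1 ≤ y ∧ y ≤ N) ∧ d ≤ Nat.dist x y) :
    d + ys.length ≤ N := by
  obtain ⟨y₀, hy₀⟩ := List.exists_mem_of_ne_nil ys hne
  have h₀ := hys y₀ hy₀
  have hcase : x + d ≤ N + 1 ∨ d + 1 ≤ x := by
    rcases h₀ with ⟨⟨h1, h2⟩, h3⟩
    simp only [Nat.dist] at h3; omega
  set lo := if x + d ≤ N + 1 then x else x - d + 1 with hlo
  have hlo1 : 1 ≤ lo := by rw [hlo]; split_ifs <;> omega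
  have hlo2 : lo + d - 1 ≤ N := by rw [hlo]; split_ifs <;> omega
  have hWsub : Finset.Icc lo (lo + d - 1) ⊆ Finset.Icc 1 N := by
    intro z hz; rw [Finset.mem_Icc] at *; omega
  have hWcard : (Finset.Icc lo (lo + d - 1)).card = d := by
    rw [Nat.card_Icc]; omega
  have hsub : ys.toFinset ⊆ Finset.Icc 1 N \ Finset.Icc lo (lo + d - 1) := by
    intro z hz
    rw [List.mem_toFinset] at hz
    obtain ⟨⟨h1, h2⟩, h3⟩ := hys z hz
    simp only [Nat.dist] at h3
    rw [Finset.mem_sdiff, Finset.mem_Icc, Finset.mem_Icc]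
    constructor
    · omega
    · rw [hlo]; split_ifs <;> omega
  have hcard := Finset.card_le_card hsub
  rw [List.toFinset_card_of_nodup hnd, Finset.card_sdiff_of_subset hWsub, hWcard, Nat.card_Icc] at hcard
  have hdN : d + 1 ≤ N := by
    obtain ⟨⟨h1, h2⟩, h3⟩ := h₀
    simp only [Nat.dist] at h3; omega
  omega

private lemma key_lemma : ∀ (n d N x : ℕ) (L : List (List ℕ)),
    L.flatten.length = n →
    (x :: L.flatten).Nodup →
    (∀ w ∈ x :: L.flatten, 1 ≤ w ∧ w ≤ N) →
    (∀ l ∈ L, List.Chain (fun a b => d ≤ Nat.dist a b) x l) →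
    (∃ l ∈ L, l ≠ []) →
    d + (L.map (fun l => (l.length + 1) / 2)).sum ≤ N := by
  intro n
  induction n using Nat.strong_induction_on with
  | _ n IH =>
  intro d N x L hlen hnd hmem hchain hne
  rcases Nat.eq_zero_or_pos d with hd0 | hd
  · -- d = 0 : counting
    subst hd0
    have h1 : (L.map (fun l => (l.length + 1) / 2)).sum ≤ (L.map List.length).sum :=
      List.sum_le_sum (fun l _ => by omega)
    have h2 : (x :: L.flatten).toFinset ⊆ Finset.Icc 1 N := by
      intro z hz
      rw [List.mem_toFinset] at hz
      have := hmem z hz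
      rw [Finset.mem_Icc]; omega
    have h3 := Finset.card_le_card h2
    rw [List.toFinset_card_of_nodup hnd, Nat.card_Icc] at h3
    simp only [List.length_cons] at h3
    rw [List.length_flatten] at h3
    omega
  by_cases hbig : ∃ l ∈ L, 2 ≤ l.length
  · -- peel case
    obtain ⟨l, hlL, hl2⟩ := hbig
    obtain ⟨L₁, L₂, rfl⟩ := List.append_of_mem hlL
    obtain ⟨l', u, v, rfl⟩ : ∃ l' u v, l = l' ++ [u, v] := by
      rcases hr : l.reverse with _ | ⟨v, rest⟩
      · rw [List.reverse_eq_nil_iff] at hr; subst hr; simp at hl2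
      rcases rest with _ | ⟨u, r⟩
      · have : l = [v] := by rw [← l.reverse_reverse, hr]; rfl
        subst this; simp at hl2
      · refine ⟨r.reverse, u, v, ?_⟩
        rw [← l.reverse_reverse, hr]; simp
    -- basic facts
    have hch := hchain (l' ++ [u, v]) hlL
    have huv : d ≤ Nat.dist u v := chain_last_pair l' x u v hch
    have hchl' : List.Chain (fun a b => d ≤ Nat.dist a b) x l' := by
      apply chain_prefix l' x [u, v]; exact hch
    have huvne : u ≠ v := by
      intro h; subst h; simp [Nat.dist] at huv; omega
    set K := L₁ ++ l' :: L₂ with hK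
    have hflatL : (L₁ ++ (l' ++ [u, v]) :: L₂).flatten
        = L₁.flatten ++ (l' ++ [u, v]) ++ L₂.flatten := by
      simp
    have hflatK : K.flatten = L₁.flatten ++ l' ++ L₂.flatten := by simp [hK]
    have hperm : (x :: (L₁ ++ (l' ++ [u, v]) :: L₂).flatten).Perm
        ((x :: K.flatten) ++ [u, v]) := by
      rw [hflatL, hflatK]
      simp only [List.cons_append, List.append_assoc]
      refine List.Perm.cons x ?_
      have h1 : ([u, v] ++ L₂.flatten).Perm (L₂.flatten ++ [u, v]) := List.perm_append_comm
      simpa using (h1.append_left l').append_left L₁.flatten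
    have hndR := (hperm.nodup_iff).mp hnd
    rw [List.nodup_append] at hndR
    obtain ⟨hndK, _, hdisj⟩ := hndR
    have hneq : ∀ w ∈ x :: K.flatten, w ≠ u ∧ w ≠ v := by
      intro w hw
      have := hdisj _ hw
      simp at this
      exact ⟨this.1, this.2⟩
    have hmemK : ∀ w ∈ x :: K.flatten, 1 ≤ w ∧ w ≤ N := by
      intro w hw
      apply hmem
      rw [hperm.mem_iff]
      exact List.mem_append_left _ hw
    have humem : u ∈ x :: (L₁ ++ (l' ++ [u, v]) :: L₂).flatten := by
      rw [hflatL]; simp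
    have hvmem : v ∈ x :: (L₁ ++ (l' ++ [u, v]) :: L₂).flatten := by
      rw [hflatL]; simp
    obtain ⟨hu1, huN⟩ := hmem u humem
    obtain ⟨hv1, hvN⟩ := hmem v hvmem
    have hxneq := hneq x (by simp)
    obtain ⟨hx1, hxN⟩ := hmemK x (by simp)
    have hN3 : 3 ≤ N := by
      have h1 : x ≠ u := hxneq.1
      have h2 : x ≠ v := hxneq.2
      omega
    by_cases hKne : ∃ m ∈ K, m ≠ []
    · -- apply IH
      set φ := phiC u v with hφ
      set L' := K.map (List.map φ) with hL'
      have hflat' : L'.flatten = K.flatten.map φ := by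
        rw [hL', ← List.map_flatten]
      have hlens : K.flatten.length + 2 = n := by
        rw [← hlen, hflatL, hflatK]; simp; omega
      have hmemflat : ∀ w ∈ K.flatten, w ∈ x :: K.flatten := fun w hw => by simp [hw]
      have IHap := IH K.flatten.length (by omega) (d - 1) (N - 2) (φ x) L' ?_ ?_ ?_ ?_ ?_
      · -- conclude
        have hsum' : (L'.map (fun l => (l.length + 1) / 2)).sum
            = (K.map (fun l => (l.length + 1) / 2)).sum := by
          rw [hL', List.map_map]
          congr 1
          apply List.map_congr_left
          intro m _
          simp
        have hsumK : (K.map (fun l => (l.length + 1) / 2)).sum + 1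
            = ((L₁ ++ (l' ++ [u, v]) :: L₂).map (fun l => (l.length + 1) / 2)).sum := by
          rw [hK]
          simp only [List.map_append, List.map_cons, List.sum_append, List.sum_cons]
          have : (l'.length + 2 + 1) / 2 = (l'.length + 1) / 2 + 1 := by omega
          simp [this]
          omega
        rw [hsum'] at IHap
        omega
      · rw [hflat', List.length_map]
      · -- Nodup
        rw [hflat', ← List.map_cons]
        apply List.Nodup.map_on _ hndK
        intro a ha b hb hab
        by_contra hne'
        exact phi_inj huvne hne' (hneq a ha).1 (hneq a ha).2 (hneq b hb).1 (hneq b hb).2 hab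
      · -- bounds
        rw [hflat', ← List.map_cons]
        intro w hw
        rw [List.mem_map] at hw
        obtain ⟨z, hz, rfl⟩ := hw
        obtain ⟨hz1, hzN⟩ := hmemK z hz
        exact phi_mem hu1 huN hv1 hvN hz1 hzN huvne (hneq z hz).1 (hneq z hz).2
      · -- chains
        intro m' hm'
        rw [hL', List.mem_map] at hm'
        obtain ⟨m, hm, rfl⟩ := hm'
        have hchm : List.Chain (fun a b => d ≤ Nat.dist a b) x m := by
          rw [hK] at hm
          rcases List.mem_append.mp hm with h | h
          · exact hchain m (by simp [h])
          · rcases List.mem_cons.mp h with h' | h'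
            · subst h'; exact hchl'
            · exact hchain m (by simp [h'])
        have hmK : ∀ w ∈ m, w ∈ x :: K.flatten := by
          intro w hw
          have : w ∈ K.flatten := List.mem_flatten.mpr ⟨m, hm, hw⟩
          simp [this]
        exact chain_phi huv m x hxneq.1 hxneq.2
          (fun w hw => hneq w (hmK w hw)) hchm
      · -- nonempty
        obtain ⟨m, hm, hmne⟩ := hKne
        refine ⟨m.map φ, ?_, ?_⟩
        · rw [hL']; exact List.mem_map_of_mem hm
        · simp [hmne]
    · -- K all empty : direct
      push_neg at hKne
      have hl' : l' = [] := hKne l' (by rw [hK]; simp)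
      have hsum : ((L₁ ++ (l' ++ [u, v]) :: L₂).map (fun l => (l.length + 1) / 2)).sum = 1 := by
        simp only [List.map_append, List.map_cons, List.sum_append, List.sum_cons]
        have h1 : (L₁.map (fun l => (l.length + 1) / 2)).sum = 0 := by
          apply List.sum_eq_zero
          intro z hz
          rw [List.mem_map] at hz
          obtain ⟨m, hm, rfl⟩ := hz
          have := hKne m (by rw [hK]; simp [hm])
          simp [this]
        have h2 : (L₂.map (fun l => (l.length + 1) / 2)).sum = 0 := by
          apply List.sum_eq_zero
          intro z hz
          rw [List.mem_map] at hz
          obtain ⟨m, hm, rfl⟩ := hz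
          have := hKne m (by rw [hK]; simp [hm])
          simp [this]
        rw [h1, h2, hl']
        simp
      rw [hsum]
      have hxu : d ≤ Nat.dist x u := by
        rw [hl'] at hch
        rw [List.nil_append] at hch; unfold List.Chain at hch; rw [List.chain_cons] at hch
        exact hch.1
      have : x ≠ u := hxneq.1
      simp only [Nat.dist] at hxu
      omega
  · -- star case
    push_neg at hbig
    have hsmall : ∀ l ∈ L, l.length ≤ 1 := fun l hl => by have := hbig l hl; omega
    have hys : ∀ y ∈ L.flatten, ((1 ≤ y ∧ y ≤ N) ∧ d ≤ Nat.dist x y) := by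
      intro y hy
      have hy' := hy
      rw [List.mem_flatten] at hy'
      obtain ⟨m, hm, hym⟩ := hy'
      refine ⟨by have := hmem y (by simp [hy]); exact this, ?_⟩
      have hmy : m = [y] := by
        rcases m with _ | ⟨a, t⟩
        · simp at hym
        · have := hsmall _ hm
          simp at this
          subst this
          simp at hym
          subst hym
          rfl
      have := hchain m hm
      rw [hmy] at this; unfold List.Chain at this; rw [List.chain_cons, and_iff_left (List.IsChain.singleton _)] at this
      exact this
    have hflatne : L.flatten ≠ [] := by
      obtain ⟨l, hl, hlne⟩ := hne
      obtain ⟨y, hy⟩ := List.exists_mem_of_ne_nil l hlne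
      exact List.ne_nil_of_mem (List.mem_flatten.mpr ⟨l, hl, hy⟩)
    obtain ⟨hx1, hxN⟩ := hmem x (by simp)
    have hwin := window_lemma hd hx1 hxN L.flatten hflatne (hnd.of_cons) hys
    have hsum : (L.map (fun l => (l.length + 1) / 2)).sum = L.flatten.length := by
      rw [List.length_flatten]
      congr 1
      apply List.map_congr_left
      intro m hm
      have := hsmall m hm
      omega
    omega

private lemma chain_iff_get' {α : Type*} {R : α → α → Prop} {a : α} {l : List α} :
    List.Chain R a l ↔ (∀ h : 0 < l.length, R a (l.get ⟨0, h⟩)) ∧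
      ∀ (i : ℕ) (h : i < l.length - 1), R (l.get ⟨i, by omega⟩) (l.get ⟨i + 1, by omega⟩) := by
  unfold List.Chain; rw [List.isChain_iff_getElem]
  constructor
  · intro H
    exact ⟨fun h => by simpa using H 0 (by simp; omega),
      fun i h => by
        have := H (i + 1) (by simp; omega)
        simp only [List.getElem_cons_succ, List.get_eq_getElem] at this ⊢; exact this⟩
  · rintro ⟨H0, H1⟩ i hi
    rcases i with _ | i
    · simpa using H0 (by simp at hi; omega)
    · simpa using H1 i (by simp at hi; omega)

private lemma range_even_card (m : ℕ) :
    (∑ j ∈ Finset.range m, if j % 2 = 0 then 1 else 0) = (m + 1) / 2 := by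
  induction m with
  | zero => simp
  | succ k ih => rw [Finset.sum_range_succ, ih]; split_ifs <;> omega

private lemma fin_even_card (m : ℕ) :
    (∑ j : Fin m, if (j : ℕ) % 2 = 0 then 1 else 0) = (m + 1) / 2 := by
  rw [Fin.sum_univ_eq_sum_range (fun j => if j % 2 = 0 then 1 else 0) m]
  exact range_even_card m

private lemma spiderNo_eq (p : ℕ) (ℓ : Fin p → ℕ) : spiderNo p ℓ = ∑ i, (ℓ i + 1) / 2 := by
  unfold spiderNo
  rw [Finset.card_filter, ← Finset.univ_sigma_univ, Finset.sum_sigma]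
  exact Finset.sum_congr rfl (fun i _ => fin_even_card (ℓ i))

private lemma spiderNe_add_No (p : ℕ) (ℓ : Fin p → ℕ) :
    spiderNe p ℓ + spiderNo p ℓ = ∑ i, ℓ i := by
  unfold spiderNe spiderNo
  have h : (Finset.univ.filter (fun v : Σ i : Fin p, Fin (ℓ i) => (v.2 : ℕ) % 2 = 0))
      = (Finset.univ.filter (fun v : Σ i : Fin p, Fin (ℓ i) => ¬((v.2 : ℕ) % 2 = 1))) := by
    apply Finset.filter_congr
    intro v _
    constructor <;> omega
  rw [h, Finset.card_filter_add_card_filter_not, Finset.card_univ,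
    Fintype.card_sigma]
  simp

private lemma spider_adj0 {p : ℕ} {ℓ : Fin p → ℕ} (i : Fin p) (j : Fin (ℓ i))
    (hj : (j : ℕ) = 0) : (spider p ℓ).Adj none (some ⟨i, j⟩) := by
  rw [spider, SimpleGraph.fromRel_adj]
  have hpos : 0 < ℓ i := by have := j.isLt; omega
  have hjeq : j = ⟨0, hpos⟩ := Fin.ext hj
  exact ⟨by simp, Or.inl (Or.inl ⟨rfl, i, hpos, by rw [hjeq]⟩)⟩

private lemma spider_adj_succ {p : ℕ} {ℓ : Fin p → ℕ} (i : Fin p) (j k : Fin (ℓ i))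
    (hjk : (j : ℕ) + 1 = (k : ℕ)) : (spider p ℓ).Adj (some ⟨i, j⟩) (some ⟨i, k⟩) := by
  rw [spider, SimpleGraph.fromRel_adj]
  refine ⟨?_, Or.inl (Or.inr ⟨i, j, k, hjk, rfl, rfl⟩)⟩
  intro h
  simp only [Option.some.injEq] at h
  have hjk' : j = k := by simpa using h
  subst hjk'
  omega

theorem stmt_3 (p : ℕ) (hp : 1 ≤ p) (ℓ : Fin p → ℕ) (hℓ : ∀ i, 1 ≤ ℓ i) :
    diffChromNum (spider p ℓ) ≤ spiderNe p ℓ + 1 := by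
  apply csSup_le'
  rintro d ⟨c, ⟨hinj, hmemc⟩, hdiff⟩
  classical
  set N := Fintype.card (Option (Σ i : Fin p, Fin (ℓ i))) with hN
  set L := (List.finRange p).map
    (fun i => (List.finRange (ℓ i)).map (fun j => c (some ⟨i, j⟩))) with hL
  have hrepr : c none :: L.flatten =
      ((none : Option (Σ i : Fin p, Fin (ℓ i))) ::
        (List.finRange p).flatMap (fun i => (List.finRange (ℓ i)).map
          (fun j => (some ⟨i, j⟩ : Option (Σ i : Fin p, Fin (ℓ i)))))).map c := by
    rw [hL]
    simp only [List.flatMap_def, List.map_cons, List.map_flatten, List.map_map,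
      Function.comp_def]
  have hidxnd : ((none : Option (Σ i : Fin p, Fin (ℓ i))) ::
      (List.finRange p).flatMap (fun i => (List.finRange (ℓ i)).map
        (fun j => (some ⟨i, j⟩ : Option (Σ i : Fin p, Fin (ℓ i)))))).Nodup := by
    rw [List.nodup_cons]
    constructor
    · simp
    · rw [List.nodup_flatMap]
      refine ⟨fun i _ => ?_, ?_⟩
      · refine List.Nodup.map ?_ (List.nodup_finRange _)
        intro a b hab
        simpa using hab
      · refine List.Pairwise.imp ?_ (List.nodup_finRange p)
        intro i j hij
        intro a ha hb
        rw [List.mem_map] at ha hb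
        obtain ⟨a1, -, ha⟩ := ha
        obtain ⟨b1, -, hb⟩ := hb
        rw [← ha] at hb
        simp only [Option.some.injEq] at hb
        have hfst := congrArg Sigma.fst hb
        exact hij hfst.symm
  have hnodup : (c none :: L.flatten).Nodup := by
    rw [hrepr]; exact List.Nodup.map hinj hidxnd
  have hbounds : ∀ w ∈ c none :: L.flatten, 1 ≤ w ∧ w ≤ N := by
    rw [hrepr]
    intro w hw
    rw [List.mem_map] at hw
    obtain ⟨z, -, rfl⟩ := hw
    have h := hmemc z
    rw [Finset.mem_Icc] at h
    exact h
  have hchains : ∀ l ∈ L, List.Chain (fun a b => d ≤ Nat.dist a b) (c none) l := by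
    intro l hl
    rw [hL, List.mem_map] at hl
    obtain ⟨i, -, rfl⟩ := hl
    rw [chain_iff_get']
    constructor
    · intro h
      simp only [List.get_eq_getElem, List.getElem_map, List.getElem_finRange]
      exact hdiff _ _ (spider_adj0 i _ rfl)
    · intro t ht
      simp only [List.get_eq_getElem, List.getElem_map, List.getElem_finRange]
      exact hdiff _ _ (spider_adj_succ i _ _ (by simp))
  have hnonempty : ∃ l ∈ L, l ≠ [] := by
    refine ⟨(List.finRange (ℓ ⟨0, hp⟩)).map (fun j => c (some ⟨⟨0, hp⟩, j⟩)), ?_, ?_⟩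
    · rw [hL]; exact List.mem_map_of_mem (List.mem_finRange _)
    · intro h
      have := congrArg List.length h
      simp only [List.length_map, List.length_finRange, List.length_nil] at this
      have := hℓ ⟨0, hp⟩
      omega
  have hkey := key_lemma L.flatten.length d N (c none) L rfl hnodup hbounds hchains hnonempty
  have hsum : (L.map (fun l => (l.length + 1) / 2)).sum = ∑ i, (ℓ i + 1) / 2 := by
    rw [hL, List.map_map, Fin.sum_univ_def]
    congr 1
    apply List.map_congr_left
    intro i _
    simp [Function.comp]
  have h1 := spiderNo_eq p ℓ
  have h2 := spiderNe_add_No p ℓ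
  have hNval : N = (∑ i, ℓ i) + 1 := by
    rw [hN, Fintype.card_option, Fintype.card_sigma]
    simp
  rw [hsum] at hkey
  omega
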